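/- (Nathanson) Let A = {a₀, a₁, …, a_m} be a finite set of integers with a₀ = 0 < a₁ < ⋯ < a_m = a and gcd(a₁, a₂, …, a_m) = 1. Then there exist non-negative integers c and d and sets C ⊆ [0, c−2] and D ⊆ [0, d−2] such that for all integers k ≥ a²m, kA = C ∪ [c, ka − d] ∪ (ka − D). -/
import Mathlib


open Pointwise

/-- The `n`-fold iterated sumset: `iterSum 0 A = {0}`, `iterSum (n+1) A = A + iterSum n A`. -/
def iterSum {G : Type*} [AddCommGroup G] [DecidableEq G] : ℕ → Finset G → Finset G
  | 0, _ => {0}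
  | n + 1, A => A + iterSum n A

namespace NathansonAux

open Finset

lemma iterSum_zero (A : Finset ℤ) : iterSum 0 A = {0} := rfl

lemma iterSum_succ (A : Finset ℤ) (n : ℕ) : iterSum (n+1) A = A + iterSum n A := rfl

lemma iterSum_add (A : Finset ℤ) (j l : ℕ) :
    iterSum (j + l) A = iterSum j A + iterSum l A := by
  induction j with
  | zero =>
      rw [Nat.zero_add, iterSum_zero]
      ext x; simp [Finset.mem_add]
  | succ n ih =>
      rw [Nat.succ_add, iterSum_succ, iterSum_succ, ih, add_assoc]

lemma mem_nonneg (A : Finset ℤ) (h : ∀ x ∈ A, 0 ≤ x) :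
    ∀ k, ∀ x ∈ iterSum k A, 0 ≤ x := by
  intro k
  induction k with
  | zero => intro x hx; rw [iterSum_zero, Finset.mem_singleton] at hx; omega
  | succ n ih =>
      intro x hx
      rw [iterSum_succ, Finset.mem_add] at hx
      obtain ⟨b, hb, y, hy, rfl⟩ := hx
      have h1 := h b hb
      have h2 := ih y hy
      omega

lemma mem_le (A : Finset ℤ) (a : ℤ) (h : ∀ x ∈ A, x ≤ a) :
    ∀ k, ∀ x ∈ iterSum k A, x ≤ (k : ℤ) * a := by
  intro k
  induction k with
  | zero => intro x hx; rw [iterSum_zero, Finset.mem_singleton] at hx; simp [hx]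
  | succ n ih =>
      intro x hx
      rw [iterSum_succ, Finset.mem_add] at hx
      obtain ⟨b, hb, y, hy, rfl⟩ := hx
      have h1 := h b hb
      have h2 := ih y hy
      push_cast
      nlinarith

lemma iterSum_mono (A : Finset ℤ) (h0 : (0:ℤ) ∈ A) {j k : ℕ} (hjk : j ≤ k) :
    iterSum j A ⊆ iterSum k A := by
  induction k with
  | zero => have : j = 0 := by omega
            subst this; exact fun x hx => hx
  | succ n ih =>
      rcases Nat.lt_or_ge j (n+1) with h | h
      · intro x hx
        have hx' : x ∈ iterSum n A := ih (by omega) hx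
        rw [iterSum_succ, Finset.mem_add]
        exact ⟨0, h0, x, hx', by ring⟩
      · have : j = n + 1 := by omega
        subst this; exact fun x hx => hx

lemma shrink_one (A : Finset ℤ) (hpos : ∀ x ∈ A, 0 ≤ x) :
    ∀ k, ∀ x ∈ iterSum (k+1) A, x < (k:ℤ) + 1 → x ∈ iterSum k A := by
  intro k
  induction k with
  | zero =>
      intro x hx hlt
      rw [iterSum_succ, Finset.mem_add] at hx
      obtain ⟨b, hb, y, hy, rfl⟩ := hx
      rw [iterSum_zero, Finset.mem_singleton] at hy
      subst hy
      have := hpos b hb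
      rw [iterSum_zero, Finset.mem_singleton]
      omega
  | succ n ih =>
      intro x hx hlt
      rw [iterSum_succ, Finset.mem_add] at hx
      obtain ⟨b, hb, y, hy, rfl⟩ := hx
      have hb0 := hpos b hb
      have hy0 := mem_nonneg A hpos _ y hy
      rcases eq_or_lt_of_le hb0 with h | h
      · rw [← h, zero_add]
        exact hy
      · have hylt : y < (n:ℤ) + 1 := by push_cast at hlt ⊢; omega
        have hy' : y ∈ iterSum n A := ih y hy hylt
        rw [iterSum_succ, Finset.mem_add]
        exact ⟨b, hb, y, hy', rfl⟩

lemma shrink (A : Finset ℤ) (hpos : ∀ x ∈ A, 0 ≤ x) :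
    ∀ k j, j ≤ k → ∀ x ∈ iterSum k A, x < (j:ℤ) → x ∈ iterSum j A := by
  intro k
  induction k with
  | zero => intro j hj x hx _; have : j = 0 := by omega
            subst this; exact hx
  | succ n ih =>
      intro j hj x hx hlt
      rcases Nat.lt_or_ge j (n+1) with h | h
      · have hx' : x ∈ iterSum n A := by
          apply shrink_one A hpos n x hx
          have : (j:ℤ) ≤ (n:ℤ) + 1 := by push_cast; omega
          omega
        exact ih j (by omega) x hx' hlt
      · have : j = n + 1 := by omega
        subst this; exact hx

lemma nsmul_mem (A : Finset ℤ) {x : ℤ} (hx : x ∈ A) :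
    ∀ n : ℕ, (n : ℤ) * x ∈ iterSum n A := by
  intro n
  induction n with
  | zero => rw [iterSum_zero]; simp
  | succ n ih =>
      rw [iterSum_succ, Finset.mem_add]
      exact ⟨x, hx, (n:ℤ) * x, ih, by push_cast; ring⟩

lemma sum_mem (A : Finset ℤ) (c : ℤ → ℕ) :
    ∀ B : Finset ℤ, B ⊆ A →
      (∑ t ∈ B, (c t : ℤ) * t) ∈ iterSum (∑ t ∈ B, c t) A := by
  intro B
  induction B using Finset.induction_on with
  | empty => intro _; simp [iterSum_zero]
  | @insert y s hy ih =>
      intro hsub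
      rw [Finset.sum_insert hy, Finset.sum_insert hy, iterSum_add, Finset.mem_add]
      refine ⟨(c y : ℤ) * y, ?_, _, ih (fun t ht => hsub (Finset.mem_insert_of_mem ht)), rfl⟩
      exact nsmul_mem A (hsub (Finset.mem_insert_self y s)) (c y)

lemma bezout : ∀ s : Finset ℤ, ∃ g : ℤ → ℤ, ∑ x ∈ s, g x * x = s.gcd id := by
  intro s
  induction s using Finset.induction_on with
  | empty => exact ⟨0, by simp⟩
  | @insert y s hy ih =>
      obtain ⟨g, hg⟩ := ih
      refine ⟨fun x => if x = y then Int.gcdA y (s.gcd id)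
        else g x * Int.gcdB y (s.gcd id), ?_⟩
      rw [Finset.sum_insert hy]
      beta_reduce
      rw [if_pos rfl]
      have h1 : ∑ x ∈ s, (if x = y then Int.gcdA y (s.gcd id)
          else g x * Int.gcdB y (s.gcd id)) * x
          = (∑ x ∈ s, g x * x) * Int.gcdB y (s.gcd id) := by
        rw [Finset.sum_mul]
        apply Finset.sum_congr rfl
        intro x hx
        rw [if_neg (by rintro rfl; exact hy hx)]
        ring
      rw [h1, hg, Finset.gcd_insert, ← Int.coe_gcd, Int.gcd_eq_gcd_ab]
      simp only [id]
      ring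

/-- The key quantitative middle-interval lemma. -/
lemma key (A : Finset ℤ) (a : ℤ) (m : ℕ) (ha : 1 ≤ a) (hm : 1 ≤ m)
    (h0 : (0:ℤ) ∈ A) (haA : a ∈ A) (hbd : ∀ x ∈ A, 0 ≤ x ∧ x ≤ a)
    (hcard : A.card ≤ m + 1) (hgcd : A.gcd id = 1) (k : ℕ) (x : ℤ)
    (hx1 : (m:ℤ) * a * a ≤ x) (hx2 : x ≤ (k:ℤ) * a - (m:ℤ) * a * a) :
    x ∈ iterSum k A := by
  obtain ⟨g, hg⟩ := bezout A
  rw [hgcd] at hg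
  set c : ℤ → ℕ := fun t => if t = 0 then 0 else ((x * g t) % a).toNat with hc
  set s : ℕ := ∑ t ∈ A, c t with hs
  set w : ℤ := ∑ t ∈ A, (c t : ℤ) * t with hw
  have hwmem : w ∈ iterSum s A := sum_mem A c A (le_refl _)
  have hcoe : ∀ t : ℤ, t ≠ 0 → (c t : ℤ) = (x * g t) % a := by
    intro t ht
    simp only [hc, if_neg ht]
    exact Int.toNat_of_nonneg (Int.emod_nonneg _ (by omega))
  -- a ∣ x - w
  have hsum : x - w = ∑ t ∈ A, (x * g t - (c t : ℤ)) * t := by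
    have : ∑ t ∈ A, (x * g t - (c t : ℤ)) * t
        = ∑ t ∈ A, x * g t * t - ∑ t ∈ A, (c t : ℤ) * t := by
      rw [← Finset.sum_sub_distrib]
      apply Finset.sum_congr rfl
      intro t _; ring
    rw [this, hw]
    have : ∑ t ∈ A, x * g t * t = x := by
      calc ∑ t ∈ A, x * g t * t = x * ∑ t ∈ A, g t * t := by
            rw [Finset.mul_sum]; apply Finset.sum_congr rfl; intros; ring
        _ = x := by rw [hg]; ring
    rw [this]
  have hdvd : a ∣ x - w := by
    rw [hsum]
    apply Finset.dvd_sum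
    intro t ht
    by_cases h : t = 0
    · subst h; simp
    · rw [hcoe t h]
      have : x * g t - x * g t % a = a * (x * g t / a) := by
        rw [Int.emod_def]; ring
      rw [this]
      exact Dvd.dvd.mul_right (dvd_mul_right a _) t
  -- bound on s
  have hcle : ∀ t : ℤ, (c t : ℤ) ≤ a - 1 := by
    intro t
    by_cases h : t = 0
    · simp [hc, h]; omega
    · rw [hcoe t h]
      have := Int.emod_lt_of_pos (x * g t) (show (0:ℤ) < a by omega)
      omega
  have hsle : (s : ℤ) ≤ (m : ℤ) * (a - 1) := by
    have h0' : c 0 = 0 := by simp [hc]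
    have hsplit : (s : ℤ) = ∑ t ∈ A.erase 0, (c t : ℤ) := by
      rw [hs]
      push_cast
      rw [← Finset.add_sum_erase A _ h0, h0']
      push_cast; ring
    rw [hsplit]
    have hcard' : (A.erase 0).card ≤ m := by
      have := Finset.card_erase_of_mem h0
      omega
    calc ∑ t ∈ A.erase 0, (c t : ℤ) ≤ ∑ t ∈ A.erase 0, (a - 1) :=
          Finset.sum_le_sum (fun t _ => hcle t)
      _ = ((A.erase 0).card : ℤ) * (a - 1) := by rw [Finset.sum_const]; push_cast; ring
      _ ≤ (m : ℤ) * (a - 1) := by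
          have : ((A.erase 0).card : ℤ) ≤ (m : ℤ) := by exact_mod_cast hcard'
          nlinarith
  have hw0 : 0 ≤ w := mem_nonneg A (fun t ht => (hbd t ht).1) s w hwmem
  have hwle : w ≤ (s : ℤ) * a := mem_le A a (fun t ht => (hbd t ht).2) s w hwmem
  obtain ⟨q, hq⟩ := hdvd
  have hq0 : 0 ≤ q := by nlinarith
  have hsq : (s : ℤ) + q ≤ (k : ℤ) := by
    have h2 : a * ((s:ℤ) + q) ≤ a * (k:ℤ) := by nlinarith
    exact le_of_mul_le_mul_left h2 (by omega)
  have hxeq : x = w + (q.toNat : ℤ) * a := by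
    rw [Int.toNat_of_nonneg hq0]; linarith [hq]
  have hmem2 : (q.toNat : ℤ) * a ∈ iterSum q.toNat A := nsmul_mem A haA q.toNat
  have : x ∈ iterSum (s + q.toNat) A := by
    rw [iterSum_add, Finset.mem_add]
    exact ⟨w, hwmem, _, hmem2, hxeq.symm⟩
  apply iterSum_mono A h0 _ this
  have : (s : ℤ) + (q.toNat : ℤ) ≤ (k : ℤ) := by
    rw [Int.toNat_of_nonneg hq0]; exact hsq
  exact_mod_cast this

lemma reflect (A : Finset ℤ) (a : ℤ) :
    ∀ k, iterSum k (A.image (fun x => a - x))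
      = (iterSum k A).image (fun x => (k:ℤ) * a - x) := by
  intro k
  induction k with
  | zero => ext x; simp [iterSum_zero]
  | succ n ih =>
      rw [iterSum_succ, iterSum_succ, ih]
      ext x
      simp only [Finset.mem_add, Finset.mem_image]
      constructor
      · rintro ⟨b, ⟨b', hb', rfl⟩, y, ⟨y', hy', rfl⟩, rfl⟩
        exact ⟨b' + y', ⟨b', hb', y', hy', rfl⟩, by push_cast; ring⟩
      · rintro ⟨z, ⟨b', hb', y', hy', rfl⟩, rfl⟩
        exact ⟨a - b', ⟨b', hb', rfl⟩, (n:ℤ) * a - y', ⟨y', hy', rfl⟩, by push_cast; ring⟩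

/-- Extraction of the stable low-end set. -/
lemma find_c (S : Finset ℤ) (n₀ : ℕ) :
    ∃ (c : ℕ) (C : Finset ℤ), c ≤ n₀ ∧ C ⊆ Finset.Icc 0 ((c:ℤ) - 2) ∧ C ⊆ S ∧
      (∀ x ∈ S, 0 ≤ x → x ≤ (c:ℤ) - 1 → x ∈ C) ∧
      (∀ x : ℤ, (c:ℤ) ≤ x → x ≤ (n₀:ℤ) - 1 → x ∈ S) := by
  classical
  set P : ℕ → Prop := fun c => ∀ x : ℤ, (c:ℤ) ≤ x → x ≤ (n₀:ℤ) - 1 → x ∈ S with hP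
  have hPn : P n₀ := by intro x h1 h2; omega
  have hex : ∃ n, P n := ⟨n₀, hPn⟩
  set c := Nat.find hex with hcdef
  have hPc : P c := Nat.find_spec hex
  have hcle : c ≤ n₀ := Nat.find_le hPn
  refine ⟨c, S ∩ Finset.Icc 0 ((c:ℤ) - 2), hcle, Finset.inter_subset_right,
    Finset.inter_subset_left, ?_, hPc⟩
  intro x hxS hx0 hxc
  rw [Finset.mem_inter, Finset.mem_Icc]
  refine ⟨hxS, hx0, ?_⟩
  by_contra hcon
  have hxeq : x = (c:ℤ) - 1 := by omega
  have hc1 : 1 ≤ c := by omega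
  have hnP : ¬ P (c - 1) := Nat.find_min hex (by omega)
  apply hnP
  intro y h1 h2
  rcases le_or_gt (c:ℤ) y with h | h
  · exact hPc y h h2
  · have : y = (c:ℤ) - 1 := by
      have : ((c - 1 : ℕ) : ℤ) = (c:ℤ) - 1 := by push_cast [hc1]; omega
      omega
    rw [this, ← hxeq]
    exact hxS

end NathansonAux

open NathansonAux Finset in
theorem stmt9 (m : ℕ) (hm : 1 ≤ m) (f : ℕ → ℤ) (hf0 : f 0 = 0)
    (hmono : ∀ i, i < m → f i < f (i + 1))
    (A : Finset ℤ) (hA : A = (Finset.range (m + 1)).image f)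
    (hgcd : A.gcd id = 1) :
    ∃ (c d : ℕ) (C D : Finset ℤ),
      C ⊆ Finset.Icc 0 ((c : ℤ) - 2) ∧ D ⊆ Finset.Icc 0 ((d : ℤ) - 2) ∧
      ∀ k : ℕ, (f m) ^ 2 * m ≤ (k : ℤ) →
        iterSum k A = C ∪ Finset.Icc (c : ℤ) ((k : ℤ) * f m - d) ∪
          D.image (fun x => (k : ℤ) * f m - x) := by
  classical
  set a : ℤ := f m with hadef
  -- basic monotonicity facts
  have hmono' : ∀ j, j ≤ m → ∀ i, i ≤ j → f i ≤ f j := by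
    intro j
    induction j with
    | zero => intro _ i hi; interval_cases i; exact le_refl _
    | succ n ih =>
        intro hj i hi
        rcases Nat.lt_or_ge i (n+1) with h | h
        · have h1 : f i ≤ f n := ih (by omega) i (by omega)
          have h2 : f n < f (n+1) := hmono n (by omega)
          omega
        · have : i = n + 1 := by omega
          subst this; exact le_refl _
  have hge : ∀ i, i ≤ m → (i:ℤ) ≤ f i := by
    intro i
    induction i with
    | zero => intro _; rw [hf0]; simp
    | succ n ih =>
        intro hn
        have h1 := ih (by omega)
        have h2 := hmono n (by omega)
        push_cast
        omega
  have ha : 1 ≤ a := by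
    have h1 := hge m (le_refl m)
    have h2 : (1:ℤ) ≤ (m:ℤ) := by exact_mod_cast hm
    omega
  have h0A : (0:ℤ) ∈ A := by
    rw [hA, Finset.mem_image]
    exact ⟨0, Finset.mem_range.mpr (by omega), hf0⟩
  have haA : a ∈ A := by
    rw [hA, Finset.mem_image]
    exact ⟨m, Finset.mem_range.mpr (by omega), rfl⟩
  have hbd : ∀ x ∈ A, 0 ≤ x ∧ x ≤ a := by
    intro x hx
    rw [hA, Finset.mem_image] at hx
    obtain ⟨i, hi, rfl⟩ := hx
    rw [Finset.mem_range] at hi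
    constructor
    · have := hmono' i (by omega) 0 (by omega); omega
    · exact hmono' m (le_refl m) i (by omega)
  have hcard : A.card ≤ m + 1 := by
    rw [hA]
    exact (Finset.card_image_le).trans (by simp)
  -- the reflected set
  set A' : Finset ℤ := A.image (fun x => a - x) with hA'def
  have h0A' : (0:ℤ) ∈ A' := by
    rw [hA'def, Finset.mem_image]; exact ⟨a, haA, by ring⟩
  have haA' : a ∈ A' := by
    rw [hA'def, Finset.mem_image]; exact ⟨0, h0A, by ring⟩
  have hbd' : ∀ x ∈ A', 0 ≤ x ∧ x ≤ a := by
    intro x hx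
    rw [hA'def, Finset.mem_image] at hx
    obtain ⟨y, hy, rfl⟩ := hx
    have := hbd y hy
    omega
  have hcard' : A'.card ≤ m + 1 := by
    rw [hA'def]
    exact Finset.card_image_le.trans hcard
  have hgcd' : A'.gcd id = 1 := by
    set gg := A'.gcd id with hgg
    have hdvd1 : gg ∣ A.gcd id := by
      apply Finset.dvd_gcd
      intro b hb
      have h1 : gg ∣ a := Finset.gcd_dvd haA'
      have h2 : gg ∣ a - b := by
        apply Finset.gcd_dvd
        rw [hA'def, Finset.mem_image]; exact ⟨b, hb, rfl⟩
      have : (b : ℤ) = a - (a - b) := by ring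
      rw [id]
      rw [this]
      exact dvd_sub h1 h2
    rw [hgcd] at hdvd1
    rcases Int.isUnit_iff.mp (isUnit_of_dvd_one hdvd1) with h | h
    · exact h
    · exfalso
      have hnorm : normalize gg = gg := Finset.normalize_gcd
      have h2 := Int.nonneg_of_normalize_eq_self hnorm
      omega
  -- threshold
  set n₀ : ℕ := m * (a.toNat * a.toNat) with hn₀def
  have hn₀ : (n₀ : ℤ) = (m:ℤ) * a * a := by
    rw [hn₀def]
    push_cast [Int.toNat_of_nonneg (by omega : (0:ℤ) ≤ a)]
    ring
  have hn₀pos : 1 ≤ n₀ := by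
    have : (1:ℤ) ≤ (n₀:ℤ) := by
      rw [hn₀]
      have h1 : (1:ℤ) ≤ (m:ℤ) := by exact_mod_cast hm
      have h2 : (1:ℤ) ≤ (m:ℤ) * a := by nlinarith
      nlinarith
    exact_mod_cast this
  -- find c and d
  obtain ⟨c, C, hcn, hCIcc, hCS, hClow, hCP⟩ := find_c (iterSum n₀ A) n₀
  obtain ⟨d, D, hdn, hDIcc, hDS, hDlow, hDP⟩ := find_c (iterSum n₀ A') n₀
  refine ⟨c, d, C, D, hCIcc, hDIcc, ?_⟩
  intro k hk
  have hkn : n₀ ≤ k := by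
    have : (n₀ : ℤ) ≤ (k : ℤ) := by rw [hn₀]; nlinarith [hk]
    exact_mod_cast this
  have hApos : ∀ x ∈ A, (0:ℤ) ≤ x := fun x hx => (hbd x hx).1
  have hA'pos : ∀ x ∈ A', (0:ℤ) ≤ x := fun x hx => (hbd' x hx).1
  have hrefl : ∀ x : ℤ, x ∈ iterSum k A ↔ (k:ℤ) * a - x ∈ iterSum k A' := by
    intro x
    rw [hA'def, reflect A a k, Finset.mem_image]
    constructor
    · intro h; exact ⟨x, h, rfl⟩
    · rintro ⟨y, hy, hyx⟩
      have : y = x := by omega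
      rwa [← this]
  have hreflr : ∀ y : ℤ, y ∈ iterSum n₀ A' ↔ (n₀:ℤ) * a - y ∈ iterSum n₀ A := by
    intro y
    rw [hA'def, reflect A a n₀, Finset.mem_image]
    constructor
    · rintro ⟨z, hz, rfl⟩
      have : (n₀:ℤ) * a - ((n₀:ℤ) * a - z) = z := by ring
      rwa [this]
    · intro h; exact ⟨(n₀:ℤ) * a - y, h, by ring⟩
  ext x
  simp only [Finset.mem_union, Finset.mem_Icc, Finset.mem_image]
  constructor
  · intro hx
    have hx0 : 0 ≤ x := mem_nonneg A hApos k x hx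
    have hxk : x ≤ (k:ℤ) * a := mem_le A a (fun t ht => (hbd t ht).2) k x hx
    by_cases h1 : x ≤ (c:ℤ) - 1
    · left; left
      have hxn : x ∈ iterSum n₀ A := by
        apply shrink A hApos k n₀ hkn x hx
        have : (c:ℤ) ≤ (n₀:ℤ) := by exact_mod_cast hcn
        omega
      exact hClow x hxn hx0 h1
    · by_cases h2 : (k:ℤ) * a - x ≤ (d:ℤ) - 1
      · right
        set y := (k:ℤ) * a - x with hy
        have hyA' : y ∈ iterSum k A' := (hrefl x).mp hx
        have hy0 : 0 ≤ y := by omega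
        have hyn : y ∈ iterSum n₀ A' := by
          apply shrink A' hA'pos k n₀ hkn y hyA'
          have : (d:ℤ) ≤ (n₀:ℤ) := by exact_mod_cast hdn
          omega
        exact ⟨y, hDlow y hyn hy0 h2, by omega⟩
      · left; right
        constructor
        · omega
        · omega
  · intro hx
    rcases hx with (hx | hx) | hx
    · exact iterSum_mono A h0A hkn (hCS hx)
    · obtain ⟨hxc, hxd⟩ := hx
      by_cases h1 : x ≤ (n₀:ℤ) - 1
      · exact iterSum_mono A h0A hkn (hCP x hxc h1)
      · by_cases h2 : (k:ℤ) * a - x ≤ (n₀:ℤ) - 1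
        · rw [hrefl]
          apply iterSum_mono A' h0A' hkn
          exact hDP ((k:ℤ) * a - x) (by omega) h2
        · apply key A a m ha hm h0A haA hbd hcard hgcd k x
          · rw [← hn₀]; omega
          · rw [← hn₀]; omega
    · obtain ⟨y, hy, rfl⟩ := hx
      rw [hrefl]
      have : (k:ℤ) * a - ((k:ℤ) * a - y) = y := by ring
      rw [this]
      exact iterSum_mono A' h0A' hkn (hDS hy)
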